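/- Let X be a real Banach space and let A ⊆ X be a bounded set that is not relatively weakly compact. Then there exist a sequence (xₙ)ₙ in A and δ > 0 such that for every strictly increasing sequence (n_k)ₖ of naturals and every sequence (y_k)ₖ in X with ‖y_k − x_{n_k}‖ ≤ δ for all k, the set {y_k : k ∈ ℕ} is not relatively weakly compact. (In other words, the weak-Hadamard bornology, consisting of the nonempty relatively weakly compact subsets of X, satisfies property (S).) -/

import Mathlib

open Bornology Filter Metric Set
open scoped NNReal Pointwise

section Defs

variable {X Z : Type*} [NormedAddCommGroup X] [NormedSpace ℝ X]
variable [NormedAddCommGroup Z] [NormedSpace ℝ Z]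

/-- `f` is `β`-differentiable at `x₀` with differential `L`. -/
def BetaDiffAt (β : Set (Set X)) (f : X → Z) (x₀ : X) (L : X →L[ℝ] Z) : Prop :=
  ∀ A ∈ β, ∀ ε > 0, ∃ δ > 0, ∀ t : ℝ, t ≠ 0 → |t| < δ → ∀ u ∈ A,
    ‖t⁻¹ • (f (x₀ + t • u) - f x₀) - L u‖ ≤ ε

/-- The Gâteaux bornology: nonempty finite sets. -/
def gateauxB (X : Type*) [NormedAddCommGroup X] : Set (Set X) :=
  {A | A.Nonempty ∧ A.Finite}

/-- The Fréchet bornology: nonempty bounded sets. -/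
def frechetB (X : Type*) [NormedAddCommGroup X] : Set (Set X) :=
  {A | A.Nonempty ∧ IsBounded A}

/-- The Hadamard bornology: nonempty relatively norm-compact sets. -/
def hadamardB (X : Type*) [NormedAddCommGroup X] : Set (Set X) :=
  {A | A.Nonempty ∧ IsCompact (closure A)}

/-- A bounded set is limited if every weak*-null sequence converges to 0 uniformly on it. -/
def IsLimitedSet (A : Set X) : Prop :=
  IsBounded A ∧ ∀ φ : ℕ → X →L[ℝ] ℝ,
    (∀ x : X, Tendsto (fun n => φ n x) atTop (nhds 0)) →
    ∀ ε > 0, ∃ N : ℕ, ∀ n ≥ N, ∀ x ∈ A, |φ n x| ≤ ε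

/-- The limited bornology: nonempty limited sets. -/
def limitedB (X : Type*) [NormedAddCommGroup X] [NormedSpace ℝ X] : Set (Set X) :=
  {A | A.Nonempty ∧ IsLimitedSet A}

/-- A set is relatively weakly compact if its closure in the weak topology is compact. -/
def RelWeaklyCompact (A : Set X) : Prop :=
  IsCompact (closure (⇑(toWeakSpace ℝ X) '' A) : Set (WeakSpace ℝ X))

/-- The weak-Hadamard bornology: nonempty relatively weakly compact sets. -/
def wHB (X : Type*) [NormedAddCommGroup X] [NormedSpace ℝ X] : Set (Set X) :=
  {A | A.Nonempty ∧ RelWeaklyCompact A}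

/-- A bornology (as a family of sets). -/
def IsBornologyFamily (β : Set (Set X)) : Prop :=
  (∀ A ∈ β, A.Nonempty ∧ IsBounded A) ∧
  (⋃ A ∈ β, A) = univ ∧
  (∀ A ∈ β, ∀ B ∈ β, A ∪ B ∈ β) ∧
  (∀ A ∈ β, ∀ B : Set X, B ⊆ A → B.Nonempty → B ∈ β)

/-- A vector bornology. -/
def IsVectorBornology (β : Set (Set X)) : Prop :=
  IsBornologyFamily β ∧
  (∀ A ∈ β, balancedHull ℝ A ∈ β) ∧
  (∀ A ∈ β, ∀ (x : X) (l : ℝ), (fun z => x + l • z) '' A ∈ β)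

/-- `(x, δ)` witnesses property (S) for the set `A`. -/
def WitnessS (β : Set (Set X)) (A : Set X) (x : ℕ → X) (δ : ℝ) : Prop :=
  (∀ n, x n ∈ A) ∧ 0 < δ ∧
  ∀ nk : ℕ → ℕ, StrictMono nk → ∀ y : ℕ → X,
    (∀ k, ‖y k - x (nk k)‖ ≤ δ) → Set.range y ∉ β

/-- Property (S) for a bornology. -/
def PropertyS (β : Set (Set X)) : Prop :=
  ∀ A : Set X, IsBounded A → A ∉ β → ∃ x δ, WitnessS β A x δ

/-- `T` is `β`-positively homogeneous differentiable at `y` with p.h. differential `R`. -/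
def PHDiffAt {Y : Type*} [NormedAddCommGroup Y] [NormedSpace ℝ Y]
    (β : Set (Set Y)) (T : Y → X) (y : Y) (R : Y → X) : Prop :=
  Continuous R ∧ (∀ c : ℝ, 0 ≤ c → ∀ z, R (c • z) = c • R z) ∧
  ∀ A ∈ β, ∀ ε > 0, ∃ δ > 0, ∀ t : ℝ, 0 < t → t < δ → ∀ z ∈ A,
    ‖t⁻¹ • (T (y + t • z) - T y) - R z‖ ≤ ε

end Defs



section AuxWH

open NormedSpace



/-- Helly's theorem: finite interpolation of a double-dual element by a predual element. -/
theorem helly_aux {E : Type*} [NormedAddCommGroup E] [NormedSpace ℝ E]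
    {m : ℕ} (g : Fin m → StrongDual ℝ E) (Ψ : StrongDual ℝ (StrongDual ℝ E)) {ε : ℝ} (hε : 0 < ε) :
    ∃ y : E, ‖y‖ ≤ ‖Ψ‖ + ε ∧ ∀ i, g i y = Ψ (g i) := by
  classical
  -- step 1: exact interpolation with no norm control
  obtain ⟨y₀, hy₀⟩ : ∃ y₀ : E, ∀ i, g i y₀ = Ψ (g i) := by
    by_contra h
    push_neg at h
    set T : E →ₗ[ℝ] (Fin m → ℝ) := LinearMap.pi (fun i => (g i : E →ₗ[ℝ] ℝ)) with hT
    have hcr : (fun i => Ψ (g i)) ∉ LinearMap.range T := by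
      rintro ⟨y, hy⟩
      obtain ⟨i, hi⟩ := h y
      exact hi (by simpa [T] using congrFun hy i)
    obtain ⟨φ, hφc, hφmap⟩ :=
      Submodule.exists_dual_map_eq_bot_of_notMem hcr inferInstance
    set a : Fin m → ℝ := fun i => φ (fun j => if i = j then 1 else 0) with ha
    have hφ_eq : ∀ v : Fin m → ℝ, φ v = ∑ i, v i * a i := by
      intro v
      simpa [smul_eq_mul] using LinearMap.pi_apply_eq_sum_univ φ v
    have hzero : (∑ i, a i • g i) = 0 := by
      ext y
      have : φ (T y) = 0 := by
        have hm : φ (T y) ∈ Submodule.map φ (LinearMap.range T) := ⟨T y, ⟨y, rfl⟩, rfl⟩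
        rw [hφmap] at hm
        simpa using hm
      rw [hφ_eq] at this
      simpa [mul_comm, T, LinearMap.pi_apply] using this
    have : Ψ (∑ i, a i • g i) = 0 := by rw [hzero, map_zero]
    rw [map_sum] at this
    apply hφc
    rw [hφ_eq]
    simpa [mul_comm] using this
  -- step 2: norm control via quotient
  set N : Submodule ℝ E := ⨅ i, LinearMap.ker ((g i : E →ₗ[ℝ] ℝ)) with hN
  have hNclosed : IsClosed (N : Set E) := by
    have : (N : Set E) = ⋂ i, (LinearMap.ker ((g i : E →ₗ[ℝ] ℝ)) : Set E) := by
      simp [hN, Submodule.coe_iInf]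
    rw [this]
    exact isClosed_iInter fun i => ContinuousLinearMap.isClosed_ker (g i)
  haveI : IsClosed (N : Set E) := hNclosed
  have hq : ‖(Submodule.Quotient.mk y₀ : E ⧸ N)‖ ≤ ‖Ψ‖ := by
    by_cases h0 : (Submodule.Quotient.mk y₀ : E ⧸ N) = 0
    · rw [h0, norm_zero]; exact norm_nonneg Ψ
    · obtain ⟨φq, hφqnorm, hφqval⟩ := exists_dual_vector ℝ _ (norm_ne_zero_iff.mpr h0)
      set Φ : E →L[ℝ] ℝ :=
        LinearMap.mkContinuous (φq.toLinearMap ∘ₗ N.mkQ) ‖φq‖ (by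
          intro z
          calc |φq (Submodule.Quotient.mk z)| ≤ ‖φq‖ * ‖(Submodule.Quotient.mk z : E ⧸ N)‖ :=
                φq.le_opNorm _
            _ ≤ ‖φq‖ * ‖z‖ :=
                mul_le_mul_of_nonneg_left (Submodule.Quotient.norm_mk_le N z)
                  (norm_nonneg φq)) with hΦ
      have hΦker : (⨅ i, LinearMap.ker ((g i) : E →ₗ[ℝ] ℝ))
          ≤ LinearMap.ker (Φ : E →ₗ[ℝ] ℝ) := by
        intro z hz
        have hzN : z ∈ N := by
          rw [hN, Submodule.mem_iInf]
          intro i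
          exact (Submodule.mem_iInf _).mp hz i
        have : (Submodule.Quotient.mk z : E ⧸ N) = 0 :=
          (Submodule.Quotient.mk_eq_zero N).mpr hzN
        show φq (Submodule.Quotient.mk z) = 0
        rw [this, map_zero]
      have hspan := mem_span_of_iInf_ker_le_ker (L := fun i => ((g i) : E →ₗ[ℝ] ℝ)) hΦker
      obtain ⟨a, haeq⟩ := (Submodule.mem_span_range_iff_exists_fun ℝ).mp hspan
      have hΦsum : Φ = ∑ i, a i • g i := by
        ext z
        have := congrFun (congrArg (fun (f : E →ₗ[ℝ] ℝ) => (f : E → ℝ)) haeq) z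
        simpa using this.symm
      have hval : Φ y₀ = Ψ Φ := by
        rw [hΦsum]
        simp only [ContinuousLinearMap.sum_apply, ContinuousLinearMap.coe_smul',
          Pi.smul_apply, map_sum, map_smul]
        exact Finset.sum_congr rfl fun i _ => by rw [hy₀ i]
      have hΦnorm : ‖Φ‖ ≤ 1 := by
        rw [hΦ]
        refine (LinearMap.mkContinuous_norm_le _ (norm_nonneg φq) _).trans ?_
        rw [hφqnorm]
      have : ‖(Submodule.Quotient.mk y₀ : E ⧸ N)‖ = Φ y₀ := by
        show ‖(Submodule.Quotient.mk y₀ : E ⧸ N)‖ = φq (Submodule.Quotient.mk y₀)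
        simp [hφqval]
      rw [this, hval]
      calc Ψ Φ ≤ |Ψ Φ| := le_abs_self _
        _ ≤ ‖Ψ‖ * ‖Φ‖ := Ψ.le_opNorm Φ
        _ ≤ ‖Ψ‖ * 1 := mul_le_mul_of_nonneg_left hΦnorm (norm_nonneg Ψ)
        _ = ‖Ψ‖ := mul_one _
  obtain ⟨y, hymk, hynorm⟩ := Submodule.Quotient.norm_mk_lt (Submodule.Quotient.mk y₀ : E ⧸ N) hε
  refine ⟨y, by linarith, fun i => ?_⟩
  have : y - y₀ ∈ N := (Submodule.Quotient.eq N).mp hymk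
  have hker : g i (y - y₀) = 0 := by
    have := (Submodule.mem_iInf _).mp this i
    simpa using this
  have : g i y = g i y₀ := by
    have := hker
    rw [map_sub] at this
    linarith
  rw [this, hy₀ i]

abbrev DDual (E : Type*) [NormedAddCommGroup E] [NormedSpace ℝ E] := StrongDual ℝ (StrongDual ℝ E)

theorem sep_aux {X : Type*} [NormedAddCommGroup X] [NormedSpace ℝ X]
    (F : StrongDual ℝ (StrongDual ℝ X)) {d : ℝ} (hd0 : 0 < d)
    (hd : ∀ x : X, d ≤ ‖F - inclusionInDoubleDual ℝ X x‖)
    (l : List X) :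
    ∃ f : StrongDual ℝ X, ‖f‖ ≤ 1 ∧ (∀ x ∈ l, f x = 0) ∧ d / 2 ≤ F f := by
  classical
  set J := inclusionInDoubleDual ℝ X with hJ
  set N : @Submodule ℝ (StrongDual ℝ (StrongDual ℝ X)) _ _ (@NormedSpace.toModule ℝ (StrongDual ℝ (StrongDual ℝ X)) _ inferInstance inferInstance) := Submodule.span ℝ (J '' {a | a ∈ l}) with hN
  haveI : FiniteDimensional ℝ N :=
    FiniteDimensional.span_of_finite ℝ ((l.finite_toSet).image J)
  haveI hNclosed : IsClosed (N : Set (StrongDual ℝ (StrongDual ℝ X))) :=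
    Submodule.closed_of_finiteDimensional N
  have hNle : N ≤ LinearMap.range ((J : X →L[ℝ] StrongDual ℝ (StrongDual ℝ X)) : X →ₗ[ℝ] StrongDual ℝ (StrongDual ℝ X)) := by
    rw [hN, Submodule.span_le]
    rintro _ ⟨a, -, rfl⟩
    exact ⟨a, rfl⟩
  have hmkF : d ≤ ‖(Submodule.Quotient.mk F : _ ⧸ N)‖ := by
    by_contra hlt
    push_neg at hlt
    obtain ⟨m', hm'eq, hm'norm⟩ :=
      Submodule.Quotient.norm_mk_lt (Submodule.Quotient.mk F : _ ⧸ N)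
        (sub_pos.mpr hlt)
    have hmem : m' - F ∈ N := (Submodule.Quotient.eq N).mp hm'eq
    obtain ⟨x, hx⟩ := hNle hmem
    simp only [ContinuousLinearMap.coe_coe] at hx
    have hmx : F + J x = m' := by
      rw [hx]; abel
    have : d ≤ ‖F - J (-x)‖ := hd (-x)
    rw [map_neg, sub_neg_eq_add, hmx] at this
    linarith
  have hne : (Submodule.Quotient.mk F : _ ⧸ N) ≠ 0 := by
    intro h0
    rw [h0, norm_zero] at hmkF
    linarith
  obtain ⟨φq, hφqnorm, hφqval⟩ := exists_dual_vector ℝ _ (norm_ne_zero_iff.mpr hne)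
  set Ψ : DDual (StrongDual ℝ X) :=
    LinearMap.mkContinuous (φq.toLinearMap ∘ₗ N.mkQ) ‖φq‖ (by
      intro z
      calc |φq (Submodule.Quotient.mk z)| ≤ ‖φq‖ * ‖(Submodule.Quotient.mk z : _ ⧸ N)‖ :=
            φq.le_opNorm _
        _ ≤ ‖φq‖ * ‖z‖ :=
            mul_le_mul_of_nonneg_left (Submodule.Quotient.norm_mk_le N z)
              (norm_nonneg φq)) with hΨ
  have hΨnorm : ‖Ψ‖ ≤ 1 := by
    rw [hΨ]
    refine (LinearMap.mkContinuous_norm_le _ (norm_nonneg φq) _).trans ?_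
    rw [hφqnorm]
  have hΨF : d ≤ Ψ F := by
    have : Ψ F = φq (Submodule.Quotient.mk F) := rfl
    rw [this, hφqval]
    exact hmkF
  have hΨJ : ∀ x ∈ l, Ψ (J x) = 0 := by
    intro x hx
    have hmem : J x ∈ N := Submodule.subset_span ⟨x, hx, rfl⟩
    have : (Submodule.Quotient.mk (J x) : _ ⧸ N) = 0 :=
      (Submodule.Quotient.mk_eq_zero N).mpr hmem
    show φq (Submodule.Quotient.mk (J x)) = 0
    rw [this, map_zero]
  -- Helly interpolation
  set g : Fin (l.length + 1) → StrongDual ℝ (StrongDual ℝ X) :=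
    Fin.cons F (fun i => J (l.get i)) with hg
  obtain ⟨f', hf'norm, hf'val⟩ := helly_aux g Ψ one_pos
  have hf'F : d ≤ F f' := by
    have := hf'val 0
    rw [hg] at this
    simp only [Fin.cons_zero] at this
    rw [this]
    exact hΨF
  have hf'x : ∀ x ∈ l, f' x = 0 := by
    intro x hx
    obtain ⟨i, hi⟩ := List.mem_iff_get.mp hx
    have h1 := hf'val i.succ
    rw [hg] at h1
    simp only [Fin.cons_succ, hi] at h1
    rw [hΨJ x hx, hJ, dual_def] at h1
    exact h1
  have hf'n2 : ‖f'‖ ≤ 2 := by linarith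
  refine ⟨(2 : ℝ)⁻¹ • f', ?_, ?_, ?_⟩
  · rw [norm_smul]
    simp only [norm_inv, Real.norm_ofNat]
    rw [inv_mul_le_iff₀ (by norm_num)]
    linarith
  · intro x hx
    simp [hf'x x hx]
  · rw [map_smul]
    simp only [smul_eq_mul]
    linarith


variable {X : Type*} [NormedAddCommGroup X] [NormedSpace ℝ X]

/-- The canonical map into the double dual with weak-star topology. -/
noncomputable def jW (X : Type*) [NormedAddCommGroup X] [NormedSpace ℝ X] :
    X → WeakDual ℝ (StrongDual ℝ X) :=
  fun x => StrongDual.toWeakDual (inclusionInDoubleDual ℝ X x)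

theorem jW_apply (x : X) (f : StrongDual ℝ X) : jW X x f = f x := rfl

theorem continuous_jW_weak :
    Continuous fun x : WeakSpace ℝ X => jW X ((toWeakSpace ℝ X).symm x) := by
  apply WeakBilin.continuous_of_continuous_eval
  intro f
  exact WeakBilin.eval_continuous ((topDualPairing ℝ X).flip) f

theorem pairing_flip_injective :
    Function.Injective ((topDualPairing ℝ X).flip) := by
  intro x y hxy
  have h : ∀ f : StrongDual ℝ X, f (x - y) = 0 := by
    intro f
    have := congrArg (fun φ => φ f) hxy
    simp only [LinearMap.flip_apply, topDualPairing_apply] at this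
    simp [map_sub, this]
  have := eq_zero_of_forall_dual_eq_zero ℝ h
  rwa [sub_eq_zero] at this

/-- Direction 1: relative weak compactness implies the weak-star closure of the image in the
double dual lies in the image of `X`. -/
theorem closure_subset_range_of_rwc {S : Set X} (hS : RelWeaklyCompact S) :
    closure (jW X '' S) ⊆ Set.range (jW X) := by
  have hC : IsCompact (closure (⇑(toWeakSpace ℝ X) '' S) : Set (WeakSpace ℝ X)) := hS
  have himg : IsCompact ((fun x : WeakSpace ℝ X => jW X ((toWeakSpace ℝ X).symm x)) ''
      closure (⇑(toWeakSpace ℝ X) '' S)) := hC.image continuous_jW_weak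
  have hclosed : IsClosed ((fun x : WeakSpace ℝ X => jW X ((toWeakSpace ℝ X).symm x)) ''
      closure (⇑(toWeakSpace ℝ X) '' S)) := himg.isClosed
  have hsub : jW X '' S ⊆ (fun x : WeakSpace ℝ X => jW X ((toWeakSpace ℝ X).symm x)) ''
      closure (⇑(toWeakSpace ℝ X) '' S) := by
    rintro _ ⟨a, ha, rfl⟩
    exact ⟨toWeakSpace ℝ X a, subset_closure ⟨a, ha, rfl⟩, by simp⟩
  refine (closure_minimal hsub hclosed).trans ?_
  rintro _ ⟨z, -, rfl⟩
  exact ⟨(toWeakSpace ℝ X).symm z, rfl⟩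

/-- Direction 2: if the weak-star closure of the image lies in the image of `X`, then the set
is relatively weakly compact. -/
theorem rwc_of_closure_subset {S : Set X} (hbd : IsBounded S)
    (h : closure (jW X '' S) ⊆ Set.range (jW X)) : RelWeaklyCompact S := by
  obtain ⟨R, hR⟩ := isBounded_iff_forall_norm_le.mp hbd
  -- the weak-star closure is compact by Banach-Alaoglu
  have hball : IsCompact (WeakDual.toStrongDual ⁻¹' closedBall (0 : StrongDual ℝ (StrongDual ℝ X)) R) :=
    WeakDual.isCompact_closedBall (𝕜 := ℝ) (E := StrongDual ℝ X) 0 R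
  have hsubball : jW X '' S ⊆ WeakDual.toStrongDual ⁻¹' closedBall (0 : StrongDual ℝ (StrongDual ℝ X)) R := by
    rintro _ ⟨a, ha, rfl⟩
    simp only [Set.mem_preimage, mem_closedBall, dist_zero_right]
    refine (@dist_zero_right (StrongDual ℝ (StrongDual ℝ X)) _ _).trans_le ?_
    calc ‖WeakDual.toStrongDual (jW X a)‖ = ‖inclusionInDoubleDual ℝ X a‖ := rfl
      _ ≤ ‖a‖ := double_dual_bound ℝ X a
      _ ≤ R := hR a ha
  have hKcomp : IsCompact (closure (jW X '' S)) := by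
    refine IsCompact.of_isClosed_subset hball isClosed_closure ?_
    exact closure_minimal hsubball hball.isClosed
  -- transfer compactness through the function space embeddings
  have embW := WeakBilin.isEmbedding (𝕜 := ℝ) (B := (topDualPairing ℝ X).flip)
    pairing_flip_injective
  have embD := WeakBilin.isEmbedding (𝕜 := ℝ) (B := topDualPairing ℝ (StrongDual ℝ X))
    ContinuousLinearMap.coe_injective
  set πW : WeakSpace ℝ X → (StrongDual ℝ X → ℝ) :=
    fun x f => (topDualPairing ℝ X).flip x f with hπW
  set πD : WeakDual ℝ (StrongDual ℝ X) → (StrongDual ℝ X → ℝ) :=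
    fun ψ f => topDualPairing ℝ (StrongDual ℝ X) ψ f with hπD
  have hKp : IsCompact (πD '' closure (jW X '' S)) := hKcomp.image embD.continuous
  have hrange : πD '' closure (jW X '' S) ⊆ Set.range πW := by
    rintro _ ⟨ψ, hψ, rfl⟩
    obtain ⟨x, hx⟩ := h hψ
    exact ⟨toWeakSpace ℝ X x, by rw [← hx]; rfl⟩
  set S₀ : Set (WeakSpace ℝ X) := πW ⁻¹' (πD '' closure (jW X '' S)) with hS₀
  have hS₀closed : IsClosed S₀ := hKp.isClosed.preimage embW.continuous
  have hS₀comp : IsCompact S₀ := by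
    refine (embW.isCompact_iff (s := S₀)).mpr ?_
    have : πW '' S₀ = πD '' closure (jW X '' S) := by
      apply Set.Subset.antisymm
      · exact Set.image_preimage_subset _ _
      · intro p hp
        obtain ⟨z, hz⟩ := hrange hp
        exact ⟨z, by rw [hS₀, Set.mem_preimage, hz]; exact hp, hz⟩
    show IsCompact (πW '' S₀)
    rw [this]
    exact hKp
  refine IsCompact.of_isClosed_subset hS₀comp isClosed_closure ?_
  refine closure_minimal ?_ hS₀closed
  rintro _ ⟨a, ha, rfl⟩
  rw [hS₀, Set.mem_preimage]
  refine ⟨jW X a, subset_closure ⟨a, ha, rfl⟩, rfl⟩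


end AuxWH


/-- the weak-Hadamard bornology (relatively weakly compact sets) satisfies
property (S). -/
theorem weakHadamard_propertyS
    {X : Type*} [NormedAddCommGroup X] [NormedSpace ℝ X] [CompleteSpace X]
    {A : Set X} (hAbd : IsBounded A) (hA : ¬ RelWeaklyCompact A) :
    ∃ (x : ℕ → X) (δ : ℝ), (∀ n, x n ∈ A) ∧ 0 < δ ∧
      ∀ nk : ℕ → ℕ, StrictMono nk → ∀ y : ℕ → X,
        (∀ k, ‖y k - x (nk k)‖ ≤ δ) → ¬ RelWeaklyCompact (Set.range y) := by
  classical
  open NormedSpace in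
  -- Step 1: find a point of the weak-star closure of `A` in the double dual, outside of `X`.
  obtain ⟨F₀, hF₀cl, hF₀nr⟩ : ∃ F₀, F₀ ∈ closure (jW X '' A) ∧ F₀ ∉ Set.range (jW X) := by
    by_contra hcon
    push_neg at hcon
    exact hA (rwc_of_closure_subset hAbd hcon)
  set J := inclusionInDoubleDual ℝ X with hJ
  set F : StrongDual ℝ (StrongDual ℝ X) := WeakDual.toStrongDual F₀ with hF
  have hFnr : F ∉ Set.range J := by
    rintro ⟨x, hx⟩
    apply hF₀nr
    refine ⟨x, ?_⟩
    show StrongDual.toWeakDual (J x) = F₀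
    rw [hx, hF]
    rfl
  have hrclosed : IsClosed (Set.range (⇑J)) := by
    have : Set.range (⇑J) = Set.range (⇑(inclusionInDoubleDualLi ℝ (E := X))) := rfl
    rw [this]
    have hiso : Isometry (⇑(inclusionInDoubleDualLi ℝ (E := X))) :=
      (inclusionInDoubleDualLi ℝ (E := X)).isometry
    exact hiso.isClosedEmbedding.isClosed_range
  set d : ℝ := Metric.infDist F (Set.range (⇑J)) with hdd
  have hdpos : 0 < d := by
    rw [hdd]
    have hne : (Set.range (⇑J)).Nonempty := ⟨J 0, ⟨0, rfl⟩⟩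
    exact (IsClosed.notMem_iff_infDist_pos hrclosed hne).mp hFnr
  have hd : ∀ x : X, d ≤ ‖F - J x‖ := by
    intro x
    have h1 : Metric.infDist F (Set.range (⇑J)) ≤ dist F (J x) :=
      Metric.infDist_le_dist_of_mem ⟨x, rfl⟩
    rw [hdd]
    exact h1.trans_eq (@dist_eq_norm (StrongDual ℝ (StrongDual ℝ X)) _ _ _)
  set θ : ℝ := d / 2 with hθ
  have hθpos : 0 < θ := by rw [hθ]; linarith
  -- Step 2: the two choice principles
  have hsep : ∀ xs : List X, ∃ f : StrongDual ℝ X, ‖f‖ ≤ 1 ∧ (∀ x ∈ xs, f x = 0) ∧ θ ≤ F f :=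
    fun xs => sep_aux F hdpos hd xs
  have hev : ∀ φ : StrongDual ℝ X, Continuous fun ψ : WeakDual ℝ (StrongDual ℝ X) => ψ φ :=
    fun φ => WeakBilin.eval_continuous (topDualPairing ℝ (StrongDual ℝ X)) φ
  have happrox : ∀ fs : List (StrongDual ℝ X), ∃ a, a ∈ A ∧ ∀ f ∈ fs, |f a - F f| ≤ θ / 4 := by
    intro fs
    have hopen : IsOpen {ψ : WeakDual ℝ (StrongDual ℝ X) | ∀ f ∈ fs, |ψ f - F₀ f| < θ / 4} := by
      induction fs with
      | nil => simp only [List.not_mem_nil, false_implies, implies_true, Set.setOf_true]; exact isOpen_univ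
      | cons f fs ih =>
          have h1 : IsOpen {ψ : WeakDual ℝ (StrongDual ℝ X) | |ψ f - F₀ f| < θ / 4} := by
            have hc : Continuous fun ψ : WeakDual ℝ (StrongDual ℝ X) => |ψ f - F₀ f| :=
              ((hev f).sub continuous_const).abs
            exact isOpen_lt hc continuous_const
          have he : {ψ : WeakDual ℝ (StrongDual ℝ X) | ∀ g ∈ f :: fs, |ψ g - F₀ g| < θ / 4}
              = {ψ : WeakDual ℝ (StrongDual ℝ X) | |ψ f - F₀ f| < θ / 4}
                ∩ {ψ : WeakDual ℝ (StrongDual ℝ X) | ∀ g ∈ fs, |ψ g - F₀ g| < θ / 4} := by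
            ext ψ
            simp [List.mem_cons, or_imp, forall_and]
          rw [he]
          exact h1.inter ih
    have hF₀mem : F₀ ∈ {ψ : WeakDual ℝ (StrongDual ℝ X) | ∀ f ∈ fs, |ψ f - F₀ f| < θ / 4} := by
      intro f hf
      simpa using by positivity
    obtain ⟨ψ, hψU, hψA⟩ := _root_.mem_closure_iff.mp hF₀cl _ hopen hF₀mem
    obtain ⟨a, ha, rfl⟩ := hψA
    refine ⟨a, ha, fun f hf => ?_⟩
    have := hψU f hf
    have heq : (jW X a) f = f a := rfl
    rw [heq] at this
    exact le_of_lt this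
  -- Step 3: choice functions and the recursive construction
  obtain ⟨cF, hcF⟩ : ∃ cF : List X → StrongDual ℝ X, ∀ xs,
      ‖cF xs‖ ≤ 1 ∧ (∀ x ∈ xs, cF xs x = 0) ∧ θ ≤ F (cF xs) :=
    ⟨fun xs => (hsep xs).choose, fun xs => (hsep xs).choose_spec⟩
  obtain ⟨cX, hcX⟩ : ∃ cX : List (StrongDual ℝ X) → X, ∀ fs,
      cX fs ∈ A ∧ ∀ f ∈ fs, |f (cX fs) - F f| ≤ θ / 4 :=
    ⟨fun fs => (happrox fs).choose, fun fs => (happrox fs).choose_spec⟩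
  obtain ⟨st, hst⟩ : ∃ st : List (StrongDual ℝ X × X) → StrongDual ℝ X × X, ∀ l,
      st l = (cF (l.map Prod.snd), cX (cF (l.map Prod.snd) :: l.map Prod.fst)) :=
    ⟨_, fun l => rfl⟩
  obtain ⟨pref, hp0, hpsucc⟩ : ∃ pref : ℕ → List (StrongDual ℝ X × X),
      pref 0 = [] ∧ ∀ n, pref (n + 1) = pref n ++ [st (pref n)] :=
    ⟨fun n => Nat.rec [] (fun _ l => l ++ [st l]) n, rfl, fun n => rfl⟩
  set q : ℕ → StrongDual ℝ X × X := fun n => st (pref n) with hqd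
  set x : ℕ → X := fun n => (q n).2 with hxd
  set f : ℕ → StrongDual ℝ X := fun n => (q n).1 with hfd
  have hpr : ∀ n, pref n = (List.range n).map q := by
    intro n
    induction n with
    | zero => rw [hp0, List.range_zero, List.map_nil]
    | succ n ih =>
        rw [hpsucc, ih, List.range_succ, List.map_append, List.map_singleton, hqd, ← ih]
  have hsnd : ∀ n, (pref n).map Prod.snd = (List.range n).map x := by
    intro n
    rw [hpr, List.map_map]
    rfl
  have hfst : ∀ n, (pref n).map Prod.fst = (List.range n).map f := by
    intro n
    rw [hpr, List.map_map]
    rfl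
  have hfeq : ∀ n, f n = cF ((pref n).map Prod.snd) := by
    intro n
    rw [hfd]
    show (st (pref n)).1 = _
    rw [hst]
  have hxeq : ∀ n, x n = cX (f n :: (pref n).map Prod.fst) := by
    intro n
    rw [hxd]
    show (st (pref n)).2 = _
    rw [hst, hfeq]
  -- basic properties of the construction
  have hxA : ∀ n, x n ∈ A := fun n => by rw [hxeq]; exact (hcX _).1
  have hfn1 : ∀ n, ‖f n‖ ≤ 1 := fun n => by rw [hfeq]; exact (hcF _).1
  have hfF : ∀ n, θ ≤ F (f n) := fun n => by rw [hfeq]; exact (hcF _).2.2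
  have hzero : ∀ m n, n < m → f m (x n) = 0 := by
    intro m n hnm
    rw [hfeq]
    refine (hcF _).2.1 (x n) ?_
    rw [hsnd]
    exact List.mem_map.mpr ⟨n, List.mem_range.mpr hnm, rfl⟩
  have happ : ∀ m n, m ≤ n → |f m (x n) - F (f m)| ≤ θ / 4 := by
    intro m n hmn
    rw [hxeq]
    rcases eq_or_lt_of_le hmn with rfl | hlt
    · exact (hcX _).2 (f m) List.mem_cons_self
    · refine (hcX _).2 (f m) (List.mem_cons_of_mem _ ?_)
      rw [hfst]
      exact List.mem_map.mpr ⟨m, List.mem_range.mpr hlt, rfl⟩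
  have hlow : ∀ m n, m ≤ n → 3 * θ / 4 ≤ f m (x n) := by
    intro m n hmn
    have h1 := hfF m
    have h2 := abs_le.mp (happ m n hmn)
    linarith [h2.1]
  -- Step 4: the witness
  set δ : ℝ := 3 * θ / 16 with hδd
  have hδpos : 0 < δ := by rw [hδd]; linarith
  refine ⟨x, δ, hxA, hδpos, ?_⟩
  intro nk hnk y hy hRWC
  -- perturbation bounds
  have hyub : ∀ m k, m ≤ nk k → 3 * θ / 4 - δ ≤ f m (y k) := by
    intro m k hm
    have h1 := hlow m (nk k) hm
    have h2 : |f m (y k) - f m (x (nk k))| ≤ δ := by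
      rw [← map_sub]
      calc |f m (y k - x (nk k))| ≤ ‖f m‖ * ‖y k - x (nk k)‖ := (f m).le_opNorm _
        _ ≤ 1 * δ := by
            apply mul_le_mul (hfn1 m) (hy k) (norm_nonneg _) zero_le_one
        _ = δ := one_mul _
    have := abs_le.mp h2
    linarith [this.1]
  have hylb : ∀ m k, nk k < m → f m (y k) ≤ δ := by
    intro m k hm
    have h1 := hzero m (nk k) hm
    have h2 : |f m (y k) - f m (x (nk k))| ≤ δ := by
      rw [← map_sub]
      calc |f m (y k - x (nk k))| ≤ ‖f m‖ * ‖y k - x (nk k)‖ := (f m).le_opNorm _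
        _ ≤ 1 * δ := by
            apply mul_le_mul (hfn1 m) (hy k) (norm_nonneg _) zero_le_one
        _ = δ := one_mul _
    have := abs_le.mp h2
    linarith [this.2]
  -- the sequence y is bounded
  obtain ⟨R, hR⟩ := isBounded_iff_forall_norm_le.mp hAbd
  have hyR : ∀ k, ‖y k‖ ≤ R + δ := by
    intro k
    calc ‖y k‖ = ‖y k - x (nk k) + x (nk k)‖ := by rw [sub_add_cancel]
      _ ≤ ‖y k - x (nk k)‖ + ‖x (nk k)‖ := norm_add_le _ _
      _ ≤ δ + R := add_le_add (hy k) (hR _ (hxA _))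
      _ = R + δ := add_comm _ _
  -- cluster point G of (jW (y k)) in the double dual
  set L : Filter (WeakDual ℝ (StrongDual ℝ X)) := Filter.map (fun k => jW X (y k)) atTop with hL
  haveI : L.NeBot := Filter.map_neBot
  have hLball : L ≤ 𝓟 (WeakDual.toStrongDual ⁻¹' closedBall (0 : StrongDual ℝ (StrongDual ℝ X)) (R + δ)) := by
    rw [hL, Filter.le_principal_iff, Filter.mem_map]
    refine Filter.Eventually.of_forall fun k => ?_
    simp only [Set.mem_preimage, mem_closedBall, dist_zero_right]
    refine (@dist_zero_right (StrongDual ℝ (StrongDual ℝ X)) _ _).trans_le ?_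
    calc ‖WeakDual.toStrongDual (jW X (y k))‖ = ‖inclusionInDoubleDual ℝ X (y k)‖ := rfl
      _ ≤ ‖y k‖ := double_dual_bound ℝ X _
      _ ≤ R + δ := hyR k
  obtain ⟨G, -, hGcl⟩ :=
    (WeakDual.isCompact_closedBall (𝕜 := ℝ) (E := StrongDual ℝ X) 0 (R + δ)).exists_clusterPt hLball
  have hGmem : G ∈ closure (jW X '' Set.range y) := by
    rw [mem_closure_iff_clusterPt]
    refine hGcl.mono ?_
    rw [hL, Filter.le_principal_iff, Filter.mem_map]
    exact Filter.Eventually.of_forall fun k => ⟨y k, ⟨k, rfl⟩, rfl⟩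
  obtain ⟨xb, hxb⟩ := closure_subset_range_of_rwc hRWC hGmem
  -- G evaluates large on every f m
  have hGf : ∀ m, 3 * θ / 4 - δ ≤ G (f m) := by
    intro m
    have hclosed : IsClosed {ψ : WeakDual ℝ (StrongDual ℝ X) | 3 * θ / 4 - δ ≤ ψ (f m)} :=
      isClosed_le continuous_const (hev (f m))
    have hmem : G ∈ closure {ψ : WeakDual ℝ (StrongDual ℝ X) | ∃ k, m ≤ k ∧ ψ = jW X (y k)} := by
      rw [mem_closure_iff_clusterPt]
      refine hGcl.mono ?_
      rw [hL, Filter.le_principal_iff, Filter.mem_map]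
      filter_upwards [Filter.eventually_ge_atTop m] with k hk
      exact ⟨k, hk, rfl⟩
    have hsub : {ψ : WeakDual ℝ (StrongDual ℝ X) | ∃ k, m ≤ k ∧ ψ = jW X (y k)}
        ⊆ {ψ : WeakDual ℝ (StrongDual ℝ X) | 3 * θ / 4 - δ ≤ ψ (f m)} := by
      rintro _ ⟨k, hk, rfl⟩
      have : m ≤ nk k := hk.trans (hnk.le_apply)
      have h := hyub m k this
      show 3 * θ / 4 - δ ≤ (jW X (y k)) (f m)
      rw [jW_apply]
      exact h
    exact closure_minimal hsub hclosed hmem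
  -- cluster point g of (f m) in the dual
  set L2 : Filter (WeakDual ℝ X) := Filter.map (fun m => StrongDual.toWeakDual (f m)) atTop with hL2
  haveI : L2.NeBot := Filter.map_neBot
  have hL2ball : L2 ≤ 𝓟 (WeakDual.toStrongDual ⁻¹' closedBall (0 : StrongDual ℝ X) 1) := by
    rw [hL2, Filter.le_principal_iff, Filter.mem_map]
    refine Filter.Eventually.of_forall fun m => ?_
    simp only [Set.mem_preimage, mem_closedBall, dist_zero_right]
    exact hfn1 m
  obtain ⟨g, -, hgcl⟩ :=
    (WeakDual.isCompact_closedBall (𝕜 := ℝ) (E := X) 0 1).exists_clusterPt hL2ball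
  have hevX : ∀ z : X, Continuous fun h : WeakDual ℝ X => h z :=
    fun z => WeakBilin.eval_continuous (topDualPairing ℝ X) z
  -- g is large at xb
  have hgxb : 3 * θ / 4 - δ ≤ g xb := by
    have hclosed : IsClosed {h : WeakDual ℝ X | 3 * θ / 4 - δ ≤ h xb} :=
      isClosed_le continuous_const (hevX xb)
    have hmem : g ∈ closure {h : WeakDual ℝ X | ∃ m, h = StrongDual.toWeakDual (f m)} := by
      rw [mem_closure_iff_clusterPt]
      refine hgcl.mono ?_
      rw [hL2, Filter.le_principal_iff, Filter.mem_map]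
      exact Filter.Eventually.of_forall fun m => ⟨m, rfl⟩
    have hsub : {h : WeakDual ℝ X | ∃ m, h = StrongDual.toWeakDual (f m)}
        ⊆ {h : WeakDual ℝ X | 3 * θ / 4 - δ ≤ h xb} := by
      rintro _ ⟨m, rfl⟩
      show 3 * θ / 4 - δ ≤ f m xb
      have := hGf m
      rw [← hxb] at this
      rw [jW_apply] at this
      exact this
    exact closure_minimal hsub hclosed hmem
  -- g is small on each y k
  have hgyk : ∀ k, g (y k) ≤ δ := by
    intro k
    have hclosed : IsClosed {h : WeakDual ℝ X | h (y k) ≤ δ} :=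
      isClosed_le (hevX (y k)) continuous_const
    have hmem : g ∈ closure {h : WeakDual ℝ X | ∃ m, nk k < m ∧ h = StrongDual.toWeakDual (f m)} := by
      rw [mem_closure_iff_clusterPt]
      refine hgcl.mono ?_
      rw [hL2, Filter.le_principal_iff, Filter.mem_map]
      filter_upwards [Filter.eventually_gt_atTop (nk k)] with m hm
      exact ⟨m, hm, rfl⟩
    have hsub : {h : WeakDual ℝ X | ∃ m, nk k < m ∧ h = StrongDual.toWeakDual (f m)}
        ⊆ {h : WeakDual ℝ X | h (y k) ≤ δ} := by
      rintro _ ⟨m, hm, rfl⟩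
      show f m (y k) ≤ δ
      exact hylb m k hm
    exact closure_minimal hsub hclosed hmem
  -- G is small at g, hence g xb is small: contradiction
  have hGg : g xb ≤ δ := by
    set g' : StrongDual ℝ X := WeakDual.toStrongDual g with hg'
    have hclosed : IsClosed {ψ : WeakDual ℝ (StrongDual ℝ X) | ψ g' ≤ δ} :=
      isClosed_le (hev g') continuous_const
    have hsub : jW X '' Set.range y ⊆ {ψ : WeakDual ℝ (StrongDual ℝ X) | ψ g' ≤ δ} := by
      rintro _ ⟨_, ⟨k, rfl⟩, rfl⟩
      show (jW X (y k)) g' ≤ δ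
      rw [jW_apply]
      exact hgyk k
    have := closure_minimal hsub hclosed hGmem
    have hGg' : G g' ≤ δ := this
    rw [← hxb] at hGg'
    rw [jW_apply] at hGg'
    exact hGg'
  have : 3 * θ / 4 - δ ≤ δ := hgxb.trans hGg
  rw [hδd] at this
  linarith
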